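/- Let ν > 1 and let u_ν : [0,∞) × [0,∞) → ℝ be a measurable function satisfying ∫_0^∞ e^{-μx} u_ν(t,x) dx = e^{-μ^ν t} for all μ ≥ 0, t ≥ 0, with ∫_0^∞ x |u_ν(t,x)| dx < ∞. Then ∫_0^∞ u_ν(t,x) dx = 1 and ∫_0^∞ x u_ν(t,x) dx = 0 for all t > 0; consequently, for each t > 0, u_ν(t,·) is not almost everywhere nonnegative (it is a sign-varying kernel). -/

import Mathlib

open MeasureTheory Set

open Filter Topology

theorem pseudo_subordinator_kernel_sign_varying
    (ν : ℝ) (hν : 1 < ν) (u : ℝ → ℝ → ℝ)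
    (hmeas : Measurable (Function.uncurry u))
    (hker : ∀ μ : ℝ, 0 ≤ μ → ∀ t : ℝ, 0 ≤ t →
      ∫ x in Ioi (0:ℝ), Real.exp (-μ * x) * u t x = Real.exp (-(μ ^ ν) * t))
    (hint : ∀ t : ℝ, 0 ≤ t → IntegrableOn (fun x => u t x) (Ioi 0))
    (hmom : ∀ t : ℝ, 0 ≤ t → IntegrableOn (fun x => x * |u t x|) (Ioi 0)) :
    ∀ t : ℝ, 0 < t →
      (∫ x in Ioi (0:ℝ), u t x = 1) ∧
      (∫ x in Ioi (0:ℝ), x * u t x = 0) ∧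
      ¬ (∀ᵐ x ∂(volume.restrict (Ioi (0:ℝ))), 0 ≤ u t x) := by
  intro t ht
  have hνne : ν ≠ 0 := by linarith
  have hut : Measurable (u t) := hmeas.of_uncurry_left
  have hu : IntegrableOn (fun x => u t x) (Ioi 0) := hint t ht.le
  have hm : IntegrableOn (fun x => x * |u t x|) (Ioi 0) := hmom t ht.le
  -- mass 1
  have h1 : ∫ x in Ioi (0:ℝ), u t x = 1 := by
    have h := hker 0 le_rfl t ht.le
    simpa [Real.zero_rpow hνne] using h
  -- integrability of exp(-μx) u
  have hexp_int : ∀ μ : ℝ, 0 ≤ μ →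
      IntegrableOn (fun x => Real.exp (-μ * x) * u t x) (Ioi 0) := by
    intro μ hμ
    refine hu.abs.mono' ?_ ?_
    · exact (Measurable.aestronglyMeasurable (by fun_prop))
    · filter_upwards [ae_restrict_mem measurableSet_Ioi] with x hx
      have hx0 : (0:ℝ) < x := hx
      have he : Real.exp (-μ * x) ≤ 1 := by
        apply Real.exp_le_one_iff.mpr; nlinarith
      have : ‖Real.exp (-μ * x) * u t x‖ = Real.exp (-μ * x) * |u t x| := by
        rw [norm_mul, Real.norm_eq_abs, Real.norm_eq_abs,
          abs_of_pos (Real.exp_pos _)]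
      rw [this]
      calc Real.exp (-μ * x) * |u t x| ≤ 1 * |u t x| :=
            mul_le_mul_of_nonneg_right he (abs_nonneg _)
        _ = |u t x| := one_mul _
  -- integrability of x * u
  have hxu_int : IntegrableOn (fun x => x * u t x) (Ioi 0) := by
    refine hm.mono' ((measurable_id.mul hut).aestronglyMeasurable) ?_
    filter_upwards [ae_restrict_mem measurableSet_Ioi] with x hx
    have hx0 : (0:ℝ) < x := hx
    rw [norm_mul, Real.norm_eq_abs, Real.norm_eq_abs, abs_of_pos hx0]
  -- the difference-quotient family
  set F : ℝ → ℝ → ℝ := fun μ x => (Real.exp (-μ * x) - 1) / μ * u t x with hF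
  -- dominated convergence: ∫ F μ → ∫ -x * u
  have hL1 : Tendsto (fun μ => ∫ x in Ioi (0:ℝ), F μ x) (𝓝[>] (0:ℝ))
      (𝓝 (∫ x in Ioi (0:ℝ), -x * u t x)) := by
    apply tendsto_integral_filter_of_dominated_convergence
      (fun x => x * |u t x|)
    · filter_upwards with μ
      exact (Measurable.aestronglyMeasurable (by fun_prop))
    · filter_upwards [self_mem_nhdsWithin] with μ (hμ : (0:ℝ) < μ)
      filter_upwards [ae_restrict_mem measurableSet_Ioi] with x hx
      have hx0 : (0:ℝ) < x := hx
      have hlow : 1 - μ * x ≤ Real.exp (-μ * x) := by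
        have := Real.add_one_le_exp (-μ * x); linarith
      have hup : Real.exp (-μ * x) ≤ 1 := by
        apply Real.exp_le_one_iff.mpr; nlinarith
      have habs : |Real.exp (-μ * x) - 1| ≤ μ * x := by
        rw [abs_le]; constructor <;> nlinarith
      have : |(Real.exp (-μ * x) - 1) / μ| ≤ x := by
        rw [abs_div, abs_of_pos hμ, div_le_iff₀ hμ]
        calc |Real.exp (-μ * x) - 1| ≤ μ * x := habs
          _ = x * μ := mul_comm _ _
      calc ‖F μ x‖ = |(Real.exp (-μ * x) - 1) / μ| * |u t x| := by
            rw [hF, Real.norm_eq_abs, abs_mul]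
        _ ≤ x * |u t x| := mul_le_mul_of_nonneg_right this (abs_nonneg _)
    · exact hm
    · filter_upwards with x
      have hd : HasDerivAt (fun μ : ℝ => Real.exp (-μ * x)) (-x) 0 := by
        have h0 : HasDerivAt (fun μ : ℝ => -μ * x) (-x) 0 := by
          simpa using ((hasDerivAt_id (0:ℝ)).neg.mul_const x)
        simpa using h0.exp
      have hslope := hasDerivAt_iff_tendsto_slope.mp hd
      have hslope' : Tendsto (fun μ => (Real.exp (-μ * x) - 1) / μ)
          (𝓝[≠] (0:ℝ)) (𝓝 (-x)) := by
        refine hslope.congr' ?_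
        filter_upwards [self_mem_nhdsWithin] with μ (hμ : μ ≠ 0)
        simp [slope_def_field, Real.exp_zero]
      have := (hslope'.mono_left
        (nhdsWithin_mono _ (show Ioi (0:ℝ) ⊆ {0}ᶜ from fun μ (hμ : (0:ℝ) < μ) => ne_of_gt hμ))).mul_const
          (u t x)
      simpa [hF] using this
  -- identification of ∫ F μ for μ > 0
  have hEq : ∀ᶠ μ in 𝓝[>] (0:ℝ),
      (∫ x in Ioi (0:ℝ), F μ x) = (Real.exp (-(μ ^ ν) * t) - 1) / μ := by
    filter_upwards [self_mem_nhdsWithin] with μ (hμ : (0:ℝ) < μ)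
    have hrw : ∀ x : ℝ, F μ x =
        μ⁻¹ * (Real.exp (-μ * x) * u t x - u t x) := by
      intro x; rw [hF]; field_simp
    calc (∫ x in Ioi (0:ℝ), F μ x)
        = ∫ x in Ioi (0:ℝ), μ⁻¹ * (Real.exp (-μ * x) * u t x - u t x) := by
          simp_rw [hrw]
      _ = μ⁻¹ * ∫ x in Ioi (0:ℝ), (Real.exp (-μ * x) * u t x - u t x) := by
          rw [integral_const_mul]
      _ = μ⁻¹ * ((∫ x in Ioi (0:ℝ), Real.exp (-μ * x) * u t x)
            - ∫ x in Ioi (0:ℝ), u t x) := by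
          rw [integral_sub (hexp_int μ hμ.le) hu]
      _ = (Real.exp (-(μ ^ ν) * t) - 1) / μ := by
          rw [hker μ hμ.le t ht.le, h1, div_eq_inv_mul]
  -- the right-hand derivative of the Laplace transform vanishes at 0
  have hL2 : Tendsto (fun μ => (Real.exp (-(μ ^ ν) * t) - 1) / μ)
      (𝓝[>] (0:ℝ)) (𝓝 0) := by
    have hten : Tendsto (fun μ : ℝ => μ ^ (ν - 1) * t) (𝓝[>] (0:ℝ)) (𝓝 0) := by
      have hc : Tendsto (fun μ : ℝ => μ ^ (ν - 1)) (𝓝 (0:ℝ))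
          (𝓝 ((0:ℝ) ^ (ν - 1))) :=
        (Real.continuousAt_rpow_const 0 (ν - 1) (Or.inr (by linarith))).tendsto
      rw [Real.zero_rpow (by linarith)] at hc
      simpa using (hc.mono_left nhdsWithin_le_nhds).mul_const t
    refine squeeze_zero_norm' ?_ hten
    filter_upwards [self_mem_nhdsWithin] with μ (hμ : (0:ℝ) < μ)
    have hy : (0:ℝ) ≤ μ ^ ν * t := by positivity
    have hlow : 1 - μ ^ ν * t ≤ Real.exp (-(μ ^ ν) * t) := by
      have := Real.add_one_le_exp (-(μ ^ ν) * t); linarith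
    have hup : Real.exp (-(μ ^ ν) * t) ≤ 1 := by
      apply Real.exp_le_one_iff.mpr; nlinarith
    have habs : |Real.exp (-(μ ^ ν) * t) - 1| ≤ μ ^ ν * t := by
      rw [abs_le]; constructor <;> nlinarith
    have hpow : μ ^ ν / μ = μ ^ (ν - 1) := by
      rw [Real.rpow_sub hμ, Real.rpow_one]
    calc ‖(Real.exp (-(μ ^ ν) * t) - 1) / μ‖
        = |Real.exp (-(μ ^ ν) * t) - 1| / μ := by
          rw [Real.norm_eq_abs, abs_div, abs_of_pos hμ]
      _ ≤ μ ^ ν * t / μ := by gcongr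
      _ = μ ^ (ν - 1) * t := by rw [mul_comm, mul_div_assoc, hpow, mul_comm]
  -- conclude the first moment is zero
  have hmain : (∫ x in Ioi (0:ℝ), -x * u t x) = 0 :=
    tendsto_nhds_unique (hL1.congr' hEq) hL2
  have h2 : ∫ x in Ioi (0:ℝ), x * u t x = 0 := by
    have : (∫ x in Ioi (0:ℝ), -x * u t x)
        = -∫ x in Ioi (0:ℝ), x * u t x := by
      rw [← integral_neg]; congr 1; funext x; ring
    rw [this] at hmain; linarith
  refine ⟨h1, h2, ?_⟩
  intro hpos
  have hnn : 0 ≤ᵐ[volume.restrict (Ioi (0:ℝ))] fun x => x * u t x := by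
    filter_upwards [hpos, ae_restrict_mem measurableSet_Ioi] with x hx hx0
    exact mul_nonneg (le_of_lt hx0) hx
  have hae := (integral_eq_zero_iff_of_nonneg_ae hnn hxu_int).mp h2
  have hzero : ∀ᵐ x ∂(volume.restrict (Ioi (0:ℝ))), u t x = 0 := by
    filter_upwards [hae, ae_restrict_mem measurableSet_Ioi] with x hx hx0
    have : x * u t x = 0 := hx
    rcases mul_eq_zero.mp this with h | h
    · exact absurd h (ne_of_gt hx0)
    · exact h
  have h0 : ∫ x in Ioi (0:ℝ), u t x = 0 := by
    rw [integral_congr_ae hzero]; simp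
  rw [h1] at h0; norm_num at h0
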